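/- Let p ∈ [2, ∞) and k ∈ ℕ. Then there exists a constant C = C(p) > 0 such that for every ξ, η ∈ ℝ^k one has |ξ − η|^p ≤ C · | |ξ|^{(p−2)/2} ξ − |η|^{(p−2)/2} η |². -/

import Mathlib

open Real RealInnerProductSpace


lemma rpow_superadd {a b q : ℝ} (ha : 0 ≤ a) (hb : 0 ≤ b) (hq : 1 ≤ q) :
    a ^ q + b ^ q ≤ (a + b) ^ q := by
  have h := NNReal.add_rpow_le_rpow_add (a.toNNReal) (b.toNNReal) hq
  have h1 : ((a.toNNReal : ℝ)) = a := Real.coe_toNNReal a ha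
  have h2 : ((b.toNNReal : ℝ)) = b := Real.coe_toNNReal b hb
  have := NNReal.coe_le_coe.mpr h
  push_cast [NNReal.coe_rpow] at this
  rwa [h1, h2] at this

lemma scalar_key {q A B t x : ℝ} (hq : 1 ≤ q) (hB : 0 ≤ B) (hBA : B ≤ A)
    (ht : t ≤ A * B) (hx : 0 ≤ x) (hxAB : x ≤ A + B)
    (hx2 : x ^ 2 = A ^ 2 - 2 * t + B ^ 2) :
    x ^ (q + 1) ≤ (q + 1) * 2 ^ q *
      (A ^ (q - 1) * A ^ 2 + B ^ (q - 1) * B ^ 2 - (A ^ (q - 1) + B ^ (q - 1)) * t) := by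
  have hA : 0 ≤ A := hB.trans hBA
  have hy : 0 ≤ A - B := sub_nonneg.2 hBA
  have ha : 0 ≤ A ^ (q - 1) := rpow_nonneg hA _
  have hb : 0 ≤ B ^ (q - 1) := rpow_nonneg hB _
  have hq1ne : q - 1 + 1 ≠ 0 := by linarith
  have hqne : q + 1 ≠ 0 := by linarith
  have hAq : A ^ q = A ^ (q - 1) * A := by
    rw [show q = q - 1 + 1 by ring, Real.rpow_add' hA hq1ne, Real.rpow_one]
    ring_nf
  have hBq : B ^ q = B ^ (q - 1) * B := by
    rw [show q = q - 1 + 1 by ring, Real.rpow_add' hB hq1ne, Real.rpow_one]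
    ring_nf
  have hyq1 : (A - B) ^ (q + 1) = (A - B) ^ q * (A - B) := by
    rw [Real.rpow_add' hy hqne, Real.rpow_one]
  have hsup : (A - B) ^ q + B ^ q ≤ A ^ q := by
    have := rpow_superadd hy hB hq
    rwa [sub_add_cancel] at this
  have step3 : (A - B) ^ (q + 1) ≤ (A - B) * (A ^ (q - 1) * A - B ^ (q - 1) * B) := by
    rw [hyq1]
    calc (A - B) ^ q * (A - B) ≤ (A ^ q - B ^ q) * (A - B) := by
          apply mul_le_mul_of_nonneg_right _ hy; linarith
      _ = (A - B) * (A ^ (q - 1) * A - B ^ (q - 1) * B) := by rw [hAq, hBq]; ring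
  have hu : 0 ≤ A * B - t := sub_nonneg.2 ht
  have hx2y : x ^ 2 - (A - B) ^ 2 = 2 * (A * B - t) := by rw [hx2]; ring
  have hyx : A - B ≤ x := by nlinarith
  have hypos : 0 ≤ (A - B) * (A ^ (q - 1) * A - B ^ (q - 1) * B) :=
    le_trans (rpow_nonneg hy _) step3
  have hT1 : (1 : ℝ) ≤ 2 ^ q := Real.one_le_rpow (by norm_num) (by linarith)
  have hK1 : (2 : ℝ) ≤ q + 1 := by linarith
  have hexp : A ^ (q - 1) * A ^ 2 + B ^ (q - 1) * B ^ 2 - (A ^ (q - 1) + B ^ (q - 1)) * t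
      = (A - B) * (A ^ (q - 1) * A - B ^ (q - 1) * B)
        + (A ^ (q - 1) + B ^ (q - 1)) * (A * B - t) := by ring
  rcases hx.eq_or_lt with hx0 | hx0
  · rw [← hx0, Real.zero_rpow hqne, hexp]
    have h2 : 0 ≤ (A ^ (q - 1) + B ^ (q - 1)) * (A * B - t) := mul_nonneg (by linarith) hu
    have h3 : (0 : ℝ) ≤ (q + 1) * 2 ^ q := by positivity
    nlinarith
  · -- 0 < x
    have hxq : x ^ (q + 1) = x ^ q * x := by
      rw [Real.rpow_add' hx0.le hqne, Real.rpow_one]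
    have hxqe : x ^ q = x ^ (q - 1) * x := by
      rw [show q = q - 1 + 1 by ring, Real.rpow_add' hx0.le hq1ne, Real.rpow_one]
      ring_nf
    have hX1 : 0 ≤ x ^ (q - 1) := rpow_nonneg hx _
    -- Bernoulli
    have hs : -1 ≤ (A - B) / x - 1 := by
      have : 0 ≤ (A - B) / x := div_nonneg hy hx0.le
      linarith
    have hb1 : 1 + (q + 1) * ((A - B) / x - 1) ≤ (1 + ((A - B) / x - 1)) ^ (q + 1) :=
      one_add_mul_self_le_rpow_one_add hs (by linarith)
    rw [show 1 + ((A - B) / x - 1) = (A - B) / x by ring,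
        Real.div_rpow hy hx0.le] at hb1
    have hxq1pos : 0 < x ^ (q + 1) := rpow_pos_of_pos hx0 _
    have conv : x ^ (q + 1) ≤ (A - B) ^ (q + 1) + (q + 1) * x ^ q * (x - (A - B)) := by
      have h := mul_le_mul_of_nonneg_right hb1 hxq1pos.le
      rw [div_mul_cancel₀ _ hxq1pos.ne'] at h
      have hdz : (A - B) / x * x = A - B := div_mul_cancel₀ _ hx0.ne'
      have h' : (1 + (q + 1) * ((A - B) / x - 1)) * x ^ (q + 1)
          = x ^ (q + 1) + (q + 1) * x ^ q * ((A - B) / x * x) - (q + 1) * x ^ q * x := by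
        rw [hxq]; ring
      rw [h', hdz] at h
      linarith
    have hxy2 : x * (x - (A - B)) ≤ 2 * (A * B - t) := by nlinarith
    have hxq1b : x ^ (q - 1) ≤ 2 ^ (q - 1) * A ^ (q - 1) := by
      calc x ^ (q - 1) ≤ (2 * A) ^ (q - 1) :=
            Real.rpow_le_rpow hx0.le (by linarith) (by linarith)
        _ = 2 ^ (q - 1) * A ^ (q - 1) := Real.mul_rpow (by norm_num) hA
    have h2S : (2 : ℝ) ^ (q - 1) = 2 ^ q / 2 := by
      rw [Real.rpow_sub two_pos, Real.rpow_one]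
    have hS : 0 ≤ (2 : ℝ) ^ (q - 1) := rpow_nonneg (by norm_num) _
    -- assemble
    have key2 : (q + 1) * x ^ q * (x - (A - B)) ≤ (q + 1) * 2 ^ q * (A ^ (q - 1) * (A * B - t)) := by
      have e1 : (q + 1) * x ^ q * (x - (A - B)) = (q + 1) * x ^ (q - 1) * (x * (x - (A - B))) := by
        rw [hxqe]; ring
      rw [e1]
      calc (q + 1) * x ^ (q - 1) * (x * (x - (A - B)))
          ≤ (q + 1) * x ^ (q - 1) * (2 * (A * B - t)) := by
            apply mul_le_mul_of_nonneg_left hxy2 (by positivity)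
        _ ≤ (q + 1) * (2 ^ (q - 1) * A ^ (q - 1)) * (2 * (A * B - t)) := by
            apply mul_le_mul_of_nonneg_right _ (by linarith)
            apply mul_le_mul_of_nonneg_left hxq1b (by linarith)
        _ = (q + 1) * 2 ^ q * (A ^ (q - 1) * (A * B - t)) := by rw [h2S]; ring
    have hone : (1 : ℝ) ≤ (q + 1) * 2 ^ q := by
      have h := mul_le_mul_of_nonneg_left hT1 (by linarith : (0:ℝ) ≤ q + 1)
      linarith
    have key1 : (A - B) ^ (q + 1) ≤ (q + 1) * 2 ^ q * ((A - B) * (A ^ (q - 1) * A - B ^ (q - 1) * B)) := by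
      calc (A - B) ^ (q + 1) ≤ (A - B) * (A ^ (q - 1) * A - B ^ (q - 1) * B) := step3
        _ ≤ (q + 1) * 2 ^ q * ((A - B) * (A ^ (q - 1) * A - B ^ (q - 1) * B)) :=
            le_mul_of_one_le_left hypos hone
    have hbu : 0 ≤ B ^ (q - 1) * (A * B - t) := mul_nonneg hb hu
    have hfin : 0 ≤ (q + 1) * 2 ^ q := by positivity
    calc x ^ (q + 1) ≤ (A - B) ^ (q + 1) + (q + 1) * x ^ q * (x - (A - B)) := conv
      _ ≤ (q + 1) * 2 ^ q * ((A - B) * (A ^ (q - 1) * A - B ^ (q - 1) * B))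
          + (q + 1) * 2 ^ q * (A ^ (q - 1) * (A * B - t)) := add_le_add key1 key2
      _ ≤ (q + 1) * 2 ^ q * ((A - B) * (A ^ (q - 1) * A - B ^ (q - 1) * B))
          + (q + 1) * 2 ^ q * (A ^ (q - 1) * (A * B - t))
          + (q + 1) * 2 ^ q * (B ^ (q - 1) * (A * B - t)) := by
            have := mul_nonneg hfin hbu; linarith
      _ = (q + 1) * 2 ^ q *
          (A ^ (q - 1) * A ^ 2 + B ^ (q - 1) * B ^ 2 - (A ^ (q - 1) + B ^ (q - 1)) * t) := by
          rw [hexp]; ring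

lemma scalar_key' {q A B t x : ℝ} (hq : 1 ≤ q) (hA : 0 ≤ A) (hB : 0 ≤ B)
    (ht : t ≤ A * B) (hx : 0 ≤ x) (hxAB : x ≤ A + B)
    (hx2 : x ^ 2 = A ^ 2 - 2 * t + B ^ 2) :
    x ^ (q + 1) ≤ (q + 1) * 2 ^ q *
      (A ^ (q - 1) * A ^ 2 + B ^ (q - 1) * B ^ 2 - (A ^ (q - 1) + B ^ (q - 1)) * t) := by
  rcases le_total B A with h | h
  · exact scalar_key hq hB h ht hx hxAB hx2
  · have h2 := scalar_key hq hA h (by linarith [ht] : t ≤ B * A) hx (by linarith)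
      (by linarith [hx2] : x ^ 2 = B ^ 2 - 2 * t + A ^ 2)
    linarith



/-- Let `p ∈ [2, ∞)` and `k ∈ ℕ`. Then there exists a constant
`C = C(p) > 0` such that for every `ξ, η ∈ ℝ^k` one has
`|ξ − η|^p ≤ C * | |ξ|^((p−2)/2) • ξ − |η|^((p−2)/2) • η |²`. -/
theorem stmt_0 (p : ℝ) (hp : 2 ≤ p) (k : ℕ) :
    ∃ C : ℝ, 0 < C ∧ ∀ ξ η : EuclideanSpace ℝ (Fin k),
      ‖ξ - η‖ ^ p ≤
        C * ‖(‖ξ‖ ^ ((p - 2) / 2)) • ξ - (‖η‖ ^ ((p - 2) / 2)) • η‖ ^ 2 := by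
  set q : ℝ := p / 2 with hqdef
  have hq : 1 ≤ q := by rw [hqdef]; linarith
  have hK : 0 < (q + 1) * 2 ^ q := mul_pos (by linarith) (rpow_pos_of_pos two_pos q)
  refine ⟨((q + 1) * 2 ^ q) ^ 2, pow_pos hK 2, fun ξ η => ?_⟩
  have hpq : (p - 2) / 2 = q - 1 := by rw [hqdef]; ring
  rw [hpq]
  set D := (‖ξ‖ ^ (q - 1)) • ξ - (‖η‖ ^ (q - 1)) • η with hD
  have hinner : ⟪D, ξ - η⟫ =
      ‖ξ‖ ^ (q - 1) * ‖ξ‖ ^ 2 + ‖η‖ ^ (q - 1) * ‖η‖ ^ 2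
        - (‖ξ‖ ^ (q - 1) + ‖η‖ ^ (q - 1)) * ⟪ξ, η⟫ := by
    simp only [hD, inner_sub_left, inner_sub_right, real_inner_smul_left,
      real_inner_self_eq_norm_sq]
    rw [real_inner_comm η ξ]
    ring
  have key := scalar_key' hq (norm_nonneg ξ) (norm_nonneg η)
    (real_inner_le_norm ξ η) (norm_nonneg (ξ - η)) (norm_sub_le ξ η)
    (norm_sub_sq_real ξ η)
  have hcs : ⟪D, ξ - η⟫ ≤ ‖D‖ * ‖ξ - η‖ := real_inner_le_norm D (ξ - η)
  rcases (norm_nonneg (ξ - η)).eq_or_lt with hx0 | hx0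
  · rw [← hx0, Real.zero_rpow (by linarith : p ≠ 0)]
    positivity
  · have hchain : ‖ξ - η‖ ^ (q + 1) ≤ (q + 1) * 2 ^ q * (‖D‖ * ‖ξ - η‖) := by
      calc ‖ξ - η‖ ^ (q + 1) ≤ (q + 1) * 2 ^ q *
            (‖ξ‖ ^ (q - 1) * ‖ξ‖ ^ 2 + ‖η‖ ^ (q - 1) * ‖η‖ ^ 2
              - (‖ξ‖ ^ (q - 1) + ‖η‖ ^ (q - 1)) * ⟪ξ, η⟫) := key
        _ = (q + 1) * 2 ^ q * ⟪D, ξ - η⟫ := by rw [hinner]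
        _ ≤ (q + 1) * 2 ^ q * (‖D‖ * ‖ξ - η‖) :=
            mul_le_mul_of_nonneg_left hcs hK.le
    have hxq : ‖ξ - η‖ ^ (q + 1) = ‖ξ - η‖ ^ q * ‖ξ - η‖ := by
      rw [Real.rpow_add' hx0.le (by linarith), Real.rpow_one]
    have hstep : ‖ξ - η‖ ^ q ≤ (q + 1) * 2 ^ q * ‖D‖ := by
      rw [hxq] at hchain
      have := (mul_le_mul_iff_of_pos_right hx0).mp (by linarith : ‖ξ - η‖ ^ q * ‖ξ - η‖ ≤ ((q + 1) * 2 ^ q * ‖D‖) * ‖ξ - η‖)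
      exact this
    have hxp : ‖ξ - η‖ ^ p = (‖ξ - η‖ ^ q) ^ 2 := by
      rw [show p = q * 2 by rw [hqdef]; ring, Real.rpow_mul (norm_nonneg _),
        show ((2 : ℝ)) = ((2 : ℕ) : ℝ) by norm_num, Real.rpow_natCast]
    rw [hxp]
    calc (‖ξ - η‖ ^ q) ^ 2 ≤ ((q + 1) * 2 ^ q * ‖D‖) ^ 2 :=
          pow_le_pow_left₀ (rpow_nonneg (norm_nonneg _) q) hstep 2
      _ = ((q + 1) * 2 ^ q) ^ 2 * ‖D‖ ^ 2 := by ring
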